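/- Fix p ∈ (1,∞), r > 0, v ∈ ℝ^n with r < ‖v‖_1 and |v_1| ≥ ⋯ ≥ |v_n|. Any minimizer z* of G(z) = (r − ⟨z, |v|⟩)/‖z‖_p over the box B_∞ = {z : ‖z‖_∞ ≤ 1} has all components nonnegative and ordered: z*_i ≥ z*_j whenever |v_i| > |v_j|, and more precisely (z*_i − z*_j)(|v_i| − |v_j|) ≥ 0 for all i, j. -/
import Mathlib


open Finset

noncomputable def prnorm {n : ℕ} (p : ℝ) (x : Fin n → ℝ) : ℝ :=
  (∑ i, |x i| ^ p) ^ (1 / p)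

lemma prnorm_nonneg' {n : ℕ} (p : ℝ) (x : Fin n → ℝ) : 0 ≤ prnorm p x :=
  Real.rpow_nonneg (Finset.sum_nonneg fun i _ => Real.rpow_nonneg (abs_nonneg _) _) _

lemma prnorm_mono' {n : ℕ} {p : ℝ} (hp : 0 < p) {x y : Fin n → ℝ}
    (h : ∀ i, |x i| ≤ |y i|) : prnorm p x ≤ prnorm p y :=
  Real.rpow_le_rpow (Finset.sum_nonneg fun i _ => Real.rpow_nonneg (abs_nonneg _) _)
    (Finset.sum_le_sum fun i _ => Real.rpow_le_rpow (abs_nonneg _) (h i) hp.le)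
    (by positivity)

lemma prnorm_strict' {n : ℕ} {p : ℝ} (hp : 0 < p) {x y : Fin n → ℝ}
    (h : ∀ i, |x i| ≤ |y i|) (i0 : Fin n) (hst : |x i0| < |y i0|) :
    prnorm p x < prnorm p y := by
  apply Real.rpow_lt_rpow (Finset.sum_nonneg fun i _ => Real.rpow_nonneg (abs_nonneg _) _)
  · exact Finset.sum_lt_sum (fun i _ => Real.rpow_le_rpow (abs_nonneg _) (h i) hp.le)
      ⟨i0, Finset.mem_univ _, Real.rpow_lt_rpow (abs_nonneg _) hst hp⟩
  · positivity

lemma prnorm_pos' {n : ℕ} {p : ℝ} (hp : 0 < p) {x : Fin n → ℝ} (i0 : Fin n)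
    (hx : x i0 ≠ 0) : 0 < prnorm p x := by
  apply Real.rpow_pos_of_pos _ _
  calc (0:ℝ) < |x i0| ^ p := Real.rpow_pos_of_pos (abs_pos.mpr hx) p
  _ ≤ ∑ i, |x i| ^ p :=
    Finset.single_le_sum (fun i _ => Real.rpow_nonneg (abs_nonneg _) _) (Finset.mem_univ _)

/-- Any minimizer `z*` of `G(z) = (r − ⟨z,|v|⟩)/‖z‖_p` over the box `B_∞` has nonnegative
components ordered like `|v|`. -/
theorem stmt12 {n : ℕ} (p : ℝ) (hp : 1 < p)
    (v : Fin n → ℝ) (r : ℝ) (hr : 0 < r) (hlt : r < ∑ i, |v i|)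
    (hord : ∀ i j : Fin n, i ≤ j → |v j| ≤ |v i|)
    (zs : Fin n → ℝ) (hzs : ‖zs‖ ≤ 1)
    (hmin : ∀ y : Fin n → ℝ, ‖y‖ ≤ 1 →
      (r - ∑ i, zs i * |v i|) / prnorm p zs ≤ (r - ∑ i, y i * |v i|) / prnorm p y) :
    (∀ i, 0 ≤ zs i) ∧ (∀ i j : Fin n, |v j| < |v i| → zs j ≤ zs i) ∧
      ∀ i j : Fin n, 0 ≤ (zs i - zs j) * (|v i| - |v j|) := by
  classical
  have hp0 : (0:ℝ) < p := lt_trans one_pos hp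
  have hvpos : 0 < ∑ i, |v i| := lt_trans hr hlt
  -- there is some index
  have hne : Nonempty (Fin n) := by
    by_contra h
    rw [not_nonempty_iff] at h
    simp [Finset.univ_eq_empty] at hvpos
  have hnpos : 0 < n := Fin.pos_iff_nonempty.mpr hne
  have hnormiff : ∀ y : Fin n → ℝ, ‖y‖ ≤ 1 ↔ ∀ i, |y i| ≤ 1 := by
    intro y
    rw [pi_norm_le_iff_of_nonneg zero_le_one]
    simp [Real.norm_eq_abs]
  have hzs' : ∀ i, |zs i| ≤ 1 := (hnormiff zs).mp hzs
  set S := ∑ i, zs i * |v i| with hS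
  set N := prnorm p zs with hNdef
  -- constant-one vector
  have h1 : (r - ∑ i, (fun _ : Fin n => (1:ℝ)) i * |v i|) / prnorm p (fun _ : Fin n => (1:ℝ)) < 0 := by
    have hd : 0 < prnorm p (fun _ : Fin n => (1:ℝ)) := prnorm_pos' hp0 (Classical.arbitrary _) one_ne_zero
    apply div_neg_of_neg_of_pos _ hd
    simpa using sub_neg.mpr hlt
  have hGz : (r - S) / N < 0 := lt_of_le_of_lt (hmin _ ((hnormiff _).mpr (by simp))) h1
  have hN0 : 0 ≤ N := prnorm_nonneg' p zs
  have hNpos : 0 < N := by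
    rcases hN0.lt_or_eq with h | h
    · exact h
    · rw [← h] at hGz; simp at hGz
  have hnum : r - S < 0 := by
    by_contra h
    push_neg at h
    exact absurd (div_nonneg h hN0) (not_le.mpr hGz)
  have hSr : r < S := by linarith
  -- generic contradiction lemma
  have main : ∀ y : Fin n → ℝ, ‖y‖ ≤ 1 → 0 < prnorm p y →
      prnorm p y ≤ N → S ≤ ∑ i, y i * |v i| →
      (S < ∑ i, y i * |v i| ∨ prnorm p y < N) → False := by
    intro y hy hNy hNyN hSy hor
    have hm := hmin y hy
    rw [div_le_div_iff₀ hNpos hNy] at hm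
    rcases hor with h | h
    · nlinarith
    · nlinarith
  -- positivity of prnorm from positive weighted sum
  have posof : ∀ y : Fin n → ℝ, 0 < ∑ i, y i * |v i| → 0 < prnorm p y := by
    intro y hy
    have : ∃ k, 0 < y k * |v k| := by
      by_contra h
      push_neg at h
      exact absurd (Finset.sum_nonpos fun k _ => h k) (not_le.mpr hy)
    obtain ⟨k, hk⟩ := this
    exact prnorm_pos' hp0 k (fun h => by simp [h] at hk)
  -- Part 1: nonnegativity
  have part1 : ∀ i, 0 ≤ zs i := by
    intro i
    by_contra hneg
    push_neg at hneg
    set y : Fin n → ℝ := fun k => if |v k| = 0 then 0 else |zs k| with hy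
    have hyabs : ∀ k, |y k| ≤ |zs k| := by
      intro k
      simp only [hy]
      split_ifs <;> simp [abs_abs, abs_nonneg]
    have hynorm : ‖y‖ ≤ 1 := (hnormiff y).mpr fun k => le_trans (hyabs k) (hzs' k)
    have hSy : ∀ k, zs k * |v k| ≤ y k * |v k| := by
      intro k
      simp only [hy]
      split_ifs with h
      · simp [h]
      · exact mul_le_mul_of_nonneg_right (le_abs_self _) (abs_nonneg _)
    have hSle : S ≤ ∑ k, y k * |v k| := Finset.sum_le_sum fun k _ => hSy k
    have hNyN : prnorm p y ≤ N := prnorm_mono' hp0 hyabs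
    have hNypos : 0 < prnorm p y := posof y (lt_of_lt_of_le (lt_trans hr hSr) hSle)
    apply main y hynorm hNypos hNyN hSle
    by_cases hvi : |v i| = 0
    · right
      apply prnorm_strict' hp0 hyabs i
      simp only [hy, if_pos hvi]
      simpa using abs_pos.mpr (ne_of_lt hneg)
    · left
      apply Finset.sum_lt_sum (fun k _ => hSy k) ⟨i, Finset.mem_univ _, ?_⟩
      have hvi' : 0 < |v i| := lt_of_le_of_ne (abs_nonneg _) (Ne.symm hvi)
      simp only [hy, if_neg hvi]
      have : zs i < |zs i| := lt_of_lt_of_le hneg (abs_nonneg _)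
      exact mul_lt_mul_of_pos_right this hvi'
  -- Part 3: swap argument
  have part3 : ∀ i j : Fin n, 0 ≤ (zs i - zs j) * (|v i| - |v j|) := by
    intro i j
    by_contra hneg
    push_neg at hneg
    have hij : i ≠ j := by
      intro h; rw [h] at hneg; simp at hneg
    set y : Fin n → ℝ := fun k => zs (Equiv.swap i j k) with hy
    have hynorm : ‖y‖ ≤ 1 := (hnormiff y).mpr fun k => hzs' _
    have hNy : prnorm p y = N := by
      unfold prnorm
      congr 1
      exact Equiv.sum_comp (Equiv.swap i j) (fun k => |zs k| ^ p)
    have hkey : ∑ k, y k * |v k| - S = (zs j - zs i) * (|v i| - |v j|) := by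
      rw [hS, ← Finset.sum_sub_distrib]
      have h0 : ∀ k ∈ (univ : Finset (Fin n)), k ∉ ({i, j} : Finset (Fin n)) →
          y k * |v k| - zs k * |v k| = 0 := by
        intro k _ hk
        simp only [Finset.mem_insert, Finset.mem_singleton, not_or] at hk
        simp [hy, Equiv.swap_apply_of_ne_of_ne hk.1 hk.2]
      rw [← Finset.sum_subset (Finset.subset_univ {i, j}) h0,
        Finset.sum_pair hij]
      simp only [hy, Equiv.swap_apply_left, Equiv.swap_apply_right]
      ring
    have hSlt : S < ∑ k, y k * |v k| := by nlinarith
    exact main y hynorm (hNy ▸ hNpos) (le_of_eq hNy) hSlt.le (Or.inl hSlt)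
  refine ⟨part1, fun i j hvij => ?_, part3⟩
  nlinarith [part3 i j, hvij]
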